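/- Let (M̊, g) be a Riemannian manifold with a Lie structure at infinity (M, 𝒱). Then the Levi-Civita connection of g, defined on vector fields of M̊, extends to a 𝒱-connection ∇: Γ(^𝒱TM) × Γ(^𝒱TM) → Γ(^𝒱TM), i.e. for X, Y ∈ Γ(^𝒱TM) the vector field ∇_X Y again extends to a section of ^𝒱TM, and this extension is torsion-free and compatible with the metric h on ^𝒱TM. -/
import Mathlib



/-- A Lie algebroid, formalized algebraically: `R` plays the role of `C^∞(M)`,
vector fields are `ℝ`-derivations of `R`, `Γ` is the `R`-module of global sections
of `A → M` with a Lie bracket, and the anchor satisfies the Leibniz rule.  For a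
Lie structure at infinity `(M, 𝒱)`, take `Γ = Γ(^𝒱TM) ≅ 𝒱`. -/
structure LieAlgebroid (R : Type*) [CommRing R] [Algebra ℝ R]
    (Γ : Type*) [LieRing Γ] [Module R Γ] where
  anchor : Γ →+ Derivation ℝ R R
  leibniz : ∀ (u v : Γ) (f : R), ⁅u, f • v⁆ = f • ⁅u, v⁆ + ((anchor u) f) • v

section Aux

variable {R : Type*} [CommRing R] [Algebra ℝ R]
    {Γ : Type*} [LieRing Γ] [Module R Γ]
    (L : LieAlgebroid R Γ) (h : Γ →ₗ[R] Γ →ₗ[R] R)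

/-- Koszul expression: `2 h(∇_X Y, Z)`. -/
def koszul (X Y Z : Γ) : R :=
  L.anchor X (h Y Z) + L.anchor Y (h Z X) - L.anchor Z (h X Y)
    + h ⁅X, Y⁆ Z - h ⁅Y, Z⁆ X + h ⁅Z, X⁆ Y

variable (hlin : ∀ (f : R) (X : Γ), L.anchor (f • X) = f • L.anchor X)
variable (hsymm : ∀ X Y : Γ, h X Y = h Y X)

lemma koszul_addX (X X' Y Z : Γ) :
    koszul L h (X + X') Y Z = koszul L h X Y Z + koszul L h X' Y Z := by
  simp only [koszul, map_add, add_lie, lie_add, LinearMap.add_apply, Derivation.add_apply]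
  ring

lemma koszul_addY (X Y Y' Z : Γ) :
    koszul L h X (Y + Y') Z = koszul L h X Y Z + koszul L h X Y' Z := by
  simp only [koszul, map_add, add_lie, lie_add, LinearMap.add_apply, Derivation.add_apply]
  ring

lemma koszul_addZ (X Y Z Z' : Γ) :
    koszul L h X Y (Z + Z') = koszul L h X Y Z + koszul L h X Y Z' := by
  simp only [koszul, map_add, add_lie, lie_add, LinearMap.add_apply, Derivation.add_apply]
  ring

lemma smul_lie' (f : R) (X Y : Γ) :
    ⁅f • X, Y⁆ = f • ⁅X, Y⁆ - (L.anchor Y f) • X := by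
  rw [← lie_skew (f • X) Y, L.leibniz, neg_add, sub_eq_add_neg]
  rw [← lie_skew X Y, smul_neg]

include hlin hsymm

lemma koszul_smulX (f : R) (X Y Z : Γ) :
    koszul L h (f • X) Y Z = f * koszul L h X Y Z := by
  simp only [koszul, map_smul, L.leibniz, smul_lie' L, map_add, map_sub, hlin,
    LinearMap.smul_apply, LinearMap.add_apply, LinearMap.sub_apply,
    Derivation.leibniz, Derivation.smul_apply, smul_eq_mul]
  rw [hsymm Z X, hsymm X Z, hsymm X Y]
  ring

lemma koszul_smulY (f : R) (X Y Z : Γ) :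
    koszul L h X (f • Y) Z
      = f * koszul L h X Y Z + (L.anchor X f * h Y Z + L.anchor X f * h Y Z) := by
  simp only [koszul, map_smul, L.leibniz, smul_lie' L, map_add, map_sub, hlin,
    LinearMap.smul_apply, LinearMap.add_apply, LinearMap.sub_apply,
    Derivation.leibniz, Derivation.smul_apply, smul_eq_mul]
  rw [hsymm Z X, hsymm Y X]
  ring

lemma koszul_smulZ (f : R) (X Y Z : Γ) :
    koszul L h X Y (f • Z) = f * koszul L h X Y Z := by
  simp only [koszul, map_smul, L.leibniz, smul_lie' L, map_add, map_sub, hlin,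
    LinearMap.smul_apply, LinearMap.add_apply, LinearMap.sub_apply,
    Derivation.leibniz, Derivation.smul_apply, smul_eq_mul]
  rw [hsymm Z X, hsymm Z Y]
  ring

omit hlin in
lemma koszul_symmYZ (X Y Z : Γ) :
    koszul L h X Y Z + koszul L h X Z Y
      = L.anchor X (h Y Z) + L.anchor X (h Y Z) := by
  simp only [koszul, ← lie_skew X Y, ← lie_skew Y Z, ← lie_skew X Z, map_neg,
    LinearMap.neg_apply]
  rw [hsymm Z Y, hsymm Z X, hsymm Y X]
  ring

omit hlin in
lemma koszul_antiXY (X Y Z : Γ) :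
    koszul L h X Y Z - koszul L h Y X Z = h ⁅X, Y⁆ Z + h ⁅X, Y⁆ Z := by
  simp only [koszul, ← lie_skew X Y, ← lie_skew Y Z, ← lie_skew X Z, map_neg,
    LinearMap.neg_apply]
  rw [hsymm Z Y, hsymm Z X, hsymm Y X]
  ring

end Aux

/-- For a Riemannian manifold `(M̊, g)` with a Lie structure at
infinity `(M, 𝒱)`, the Levi-Civita connection extends to a `𝒱`-connection
`∇ : Γ(^𝒱TM) × Γ(^𝒱TM) → Γ(^𝒱TM)` which is torsion-free and compatible with the
metric `h` on `^𝒱TM`.  Here `h` is the (nondegenerate, symmetric) `R`-bilinear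
metric on the module `Γ` of sections of `^𝒱TM`, the anchor of the Lie algebroid
`^𝒱TM` is `R`-linear (`hlin`), and the conclusion asserts the existence of `∇`
satisfying the connection axioms, torsion-freeness `∇_X Y − ∇_Y X = [X,Y]` and
metric compatibility `X·h(Y,Z) = h(∇_X Y, Z) + h(Y, ∇_X Z)` (Koszul formula). -/
theorem leviCivita_extends
    {R : Type*} [CommRing R] [Algebra ℝ R]
    {Γ : Type*} [LieRing Γ] [Module R Γ] [Module ℝ Γ] [IsScalarTower ℝ R Γ]
    (L : LieAlgebroid R Γ)
    (hlin : ∀ (f : R) (X : Γ), L.anchor (f • X) = f • L.anchor X)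
    (h : Γ →ₗ[R] Γ →ₗ[R] R)
    (hsymm : ∀ X Y : Γ, h X Y = h Y X)
    (hnondeg : Function.Bijective fun X : Γ => h X) :
    ∃ nabla : Γ → Γ → Γ,
      (∀ X Y Z : Γ, nabla (X + Y) Z = nabla X Z + nabla Y Z) ∧
      (∀ (f : R) (X Y : Γ), nabla (f • X) Y = f • nabla X Y) ∧
      (∀ X Y Z : Γ, nabla X (Y + Z) = nabla X Y + nabla X Z) ∧
      (∀ (X : Γ) (f : R) (Y : Γ), nabla X (f • Y) = f • nabla X Y + ((L.anchor X) f) • Y) ∧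
      (∀ X Y : Γ, nabla X Y - nabla Y X = ⁅X, Y⁆) ∧
      (∀ X Y Z : Γ, (L.anchor X) (h Y Z) = h (nabla X Y) Z + h Y (nabla X Z)) := by
  classical
  set c : R := algebraMap ℝ R 2⁻¹ with hc
  have hcc : ∀ x : R, c * x + c * x = x := by
    intro x
    rw [← add_mul, hc, ← map_add]
    norm_num
  -- the Koszul functional, as a linear map in `Z`
  set K : Γ → Γ → (Γ →ₗ[R] R) := fun X Y =>
    { toFun := fun Z => koszul L h X Y Z
      map_add' := fun Z Z' => koszul_addZ L h X Y Z Z'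
      map_smul' := fun f Z => by
        simpa using koszul_smulZ L h hlin hsymm f X Y Z } with hK
  set e : Γ ≃ (Γ →ₗ[R] R) := Equiv.ofBijective _ hnondeg with he
  set nabla : Γ → Γ → Γ := fun X Y => e.symm (c • K X Y) with hnabla
  have hval : ∀ X Y Z : Γ, h (nabla X Y) Z = c * koszul L h X Y Z := by
    intro X Y Z
    have : h (nabla X Y) = c • K X Y := e.apply_symm_apply (c • K X Y)
    rw [this]
    simp [hK, smul_eq_mul]
  have hinj : ∀ A B : Γ, (∀ Z, h A Z = h B Z) → A = B := by
    intro A B H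
    exact hnondeg.injective (LinearMap.ext H)
  refine ⟨nabla, ?_, ?_, ?_, ?_, ?_, ?_⟩
  · intro X Y Z
    refine hinj _ _ fun W => ?_
    rw [hval, map_add, LinearMap.add_apply, hval, hval, koszul_addX]
    ring
  · intro f X Y
    refine hinj _ _ fun W => ?_
    rw [hval, map_smul, LinearMap.smul_apply, hval, koszul_smulX L h hlin hsymm,
      smul_eq_mul]
    ring
  · intro X Y Z
    refine hinj _ _ fun W => ?_
    rw [hval, map_add, LinearMap.add_apply, hval, hval, koszul_addY]
    ring
  · intro X f Y
    refine hinj _ _ fun W => ?_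
    rw [hval, map_add, LinearMap.add_apply, map_smul, map_smul,
      LinearMap.smul_apply, LinearMap.smul_apply, hval,
      koszul_smulY L h hlin hsymm, smul_eq_mul, smul_eq_mul, mul_add, mul_add]
    rw [hcc (L.anchor X f * h Y W)]
    ring
  · intro X Y
    refine hinj _ _ fun W => ?_
    rw [map_sub, LinearMap.sub_apply, hval, hval, ← mul_sub,
      koszul_antiXY L h hsymm, mul_add, hcc]
  · intro X Y Z
    rw [hsymm Y (nabla X Z), hval, hval, ← mul_add, koszul_symmYZ L h hsymm,
      mul_add, hcc]
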